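/- Suppose ∑_k |α_k|^2 < ∞. For each m ≥ 1, the m-fold sum d_m = ∑ over ordered compositions (a_1,…,a_j) of m and integer tuples k_2 < k_1 − a_1, …, k_j < k_{j−1} − a_{j−1} (with k_1 ranging over all of ℤ) of α_{k_1}conj(α_{k_1−a_1})⋯α_{k_j}conj(α_{k_j−a_j}) converges absolutely, with |d_m| ≤ ∑_{compositions (a_1,…,a_j) of m} ∏_{l=1}^{j} (∑_k |α_k||α_{k−a_l}|). -/

import Mathlib

set_option maxHeartbeats 1000000

lemma aux_summable_h (α : ℤ → ℂ) (hsum : Summable fun k : ℤ => ‖α k‖ ^ 2) (a : ℤ) :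
    Summable fun k : ℤ => ‖α k‖ * ‖α (k - a)‖ := by
  have h2 : Summable fun k : ℤ => ‖α (k - a)‖ ^ 2 := hsum.comp_injective sub_left_injective
  refine Summable.of_nonneg_of_le (fun k => by positivity) (fun k => ?_)
    ((hsum.add h2).div_const 2)
  nlinarith [two_mul_le_add_sq ‖α k‖ ‖α (k - a)‖]

lemma aux_pi_prod {n : ℕ} (h : Fin n → ℤ → ℝ) (hnn : ∀ i k, 0 ≤ h i k)
    (hs : ∀ i, Summable (h i)) :
    Summable (fun k : Fin n → ℤ => ∏ i, h i (k i)) ∧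
      (∑' k : Fin n → ℤ, ∏ i, h i (k i)) = ∏ i, ∑' k, h i k := by
  induction n with
  | zero =>
    constructor
    · exact Summable.of_finite
    · rw [tsum_eq_single (fun i => 0) (fun b hb => absurd (Subsingleton.elim b _) hb)]
      simp
  | succ n ih =>
    obtain ⟨ihs, iht⟩ := ih (fun i => h i.succ) (fun i k => hnn _ k) (fun i => hs _)
    have hpair : Summable (fun p : ℤ × (Fin n → ℤ) =>
        h 0 p.1 * ∏ i : Fin n, h i.succ (p.2 i)) :=
      Summable.mul_of_nonneg (f := h 0)
        (g := fun k : Fin n → ℤ => ∏ i : Fin n, h i.succ (k i))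
        (hs 0) ihs (fun k => hnn 0 k)
        (fun k => Finset.prod_nonneg fun i _ => hnn _ _)
    have he : ∀ k : Fin (n+1) → ℤ,
        (∏ i, h i (k i)) = h 0 (k 0) * ∏ i : Fin n, h i.succ (k i.succ) := fun k =>
      Fin.prod_univ_succ _
    have hsummable : Summable (fun k : Fin (n+1) → ℤ => ∏ i, h i (k i)) := by
      have := (Fin.consEquiv fun _ : Fin (n+1) => ℤ).symm.summable_iff.mpr hpair
      simp only [Fin.consEquiv, Equiv.coe_fn_mk, Function.comp] at this
      convert this using 1
      funext k
      exact he k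
    refine ⟨hsummable, ?_⟩
    have h1 : (∑' k : Fin (n+1) → ℤ, ∏ i, h i (k i))
        = ∑' p : ℤ × (Fin n → ℤ), h 0 p.1 * ∏ i : Fin n, h i.succ (p.2 i) := by
      rw [← (Fin.consEquiv fun _ : Fin (n+1) => ℤ).symm.tsum_eq
        (fun p : ℤ × (Fin n → ℤ) => h 0 p.1 * ∏ i : Fin n, h i.succ (p.2 i))]
      exact tsum_congr fun k => he k
    rw [h1, Summable.tsum_prod' (f := fun p : ℤ × (Fin n → ℤ) =>
        h 0 p.1 * ∏ i : Fin n, h i.succ (p.2 i)) hpair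
        (fun b => ihs.mul_left (h 0 b)), Fin.prod_univ_succ]
    calc (∑' (b : ℤ) (c : Fin n → ℤ), h 0 b * ∏ i : Fin n, h i.succ (c i))
        = ∑' b : ℤ, h 0 b * ∑' c : Fin n → ℤ, ∏ i : Fin n, h i.succ (c i) :=
          tsum_congr fun b => tsum_mul_left
      _ = (∑' b : ℤ, h 0 b) * ∑' c : Fin n → ℤ, ∏ i : Fin n, h i.succ (c i) :=
          tsum_mul_right
      _ = (∑' k, h 0 k) * ∏ i : Fin n, ∑' k, h i.succ k := by rw [iht]

/-- If the extended Verblunsky coefficients are square-summable, then for each `m ≥ 1`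
the multiple series defining `d_m` (over ordered compositions `(a_1,…,a_j)` of `m` and
integer tuples `k_2 < k_1 - a_1, …, k_j < k_{j-1} - a_{j-1}` with `k_1 ∈ ℤ` free)
converges absolutely, and
`|d_m| ≤ ∑_{compositions (a_1,…,a_j) of m} ∏_{l=1}^{j} (∑_k ‖α_k‖‖α_{k-a_l}‖)`. -/
theorem dm_summable_and_bound (α : ℤ → ℂ) (hα : ∀ n : ℤ, 0 ≤ n → ‖α n‖ < 1)
    (hm1 : α (-1) = -1) (hm2 : ∀ k : ℤ, k ≤ -2 → α k = 0)
    (hsum : Summable fun k : ℤ => ‖α k‖ ^ 2) (m : ℕ) (hm : 1 ≤ m) :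
    (Summable fun p : Σ j : ℕ, (Fin (j + 1) → ℕ) × (Fin (j + 1) → ℤ) =>
      ‖if (∀ i, 1 ≤ p.2.1 i) ∧ (∑ i, p.2.1 i) = m ∧
            (∀ i : Fin p.1, p.2.2 i.succ < p.2.2 i.castSucc - (p.2.1 i.castSucc : ℤ))
        then ∏ i, α (p.2.2 i) * (starRingEnd ℂ) (α (p.2.2 i - (p.2.1 i : ℤ)))
        else 0‖)
    ∧
    ‖∑' p : Σ j : ℕ, (Fin (j + 1) → ℕ) × (Fin (j + 1) → ℤ),
        if (∀ i, 1 ≤ p.2.1 i) ∧ (∑ i, p.2.1 i) = m ∧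
            (∀ i : Fin p.1, p.2.2 i.succ < p.2.2 i.castSucc - (p.2.1 i.castSucc : ℤ))
        then ∏ i, α (p.2.2 i) * (starRingEnd ℂ) (α (p.2.2 i - (p.2.1 i : ℤ)))
        else 0‖
      ≤ ∑' c : Σ j : ℕ, Fin (j + 1) → ℕ,
          if (∀ i, 1 ≤ c.2 i) ∧ (∑ i, c.2 i) = m
          then ∏ i, ∑' k : ℤ, ‖α k‖ * ‖α (k - (c.2 i : ℤ))‖
          else 0 := by
  classical
  set F : (Σ j : ℕ, (Fin (j + 1) → ℕ) × (Fin (j + 1) → ℤ)) → ℝ := fun p =>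
    if (∀ i, 1 ≤ p.2.1 i) ∧ (∑ i, p.2.1 i) = m
    then ∏ i, ‖α (p.2.2 i)‖ * ‖α (p.2.2 i - (p.2.1 i : ℤ))‖ else 0 with hF
  set f : (Σ j : ℕ, (Fin (j + 1) → ℕ) × (Fin (j + 1) → ℤ)) → ℂ := fun p =>
    if (∀ i, 1 ≤ p.2.1 i) ∧ (∑ i, p.2.1 i) = m ∧
          (∀ i : Fin p.1, p.2.2 i.succ < p.2.2 i.castSucc - (p.2.1 i.castSucc : ℤ))
    then ∏ i, α (p.2.2 i) * (starRingEnd ℂ) (α (p.2.2 i - (p.2.1 i : ℤ)))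
    else 0 with hf
  set R : (Σ j : ℕ, Fin (j + 1) → ℕ) → ℝ := fun c =>
    if (∀ i, 1 ≤ c.2 i) ∧ (∑ i, c.2 i) = m
    then ∏ i, ∑' k : ℤ, ‖α k‖ * ‖α (k - (c.2 i : ℤ))‖ else 0 with hR
  have hh : ∀ a : ℤ, Summable fun k : ℤ => ‖α k‖ * ‖α (k - a)‖ :=
    aux_summable_h α hsum
  have hF0 : ∀ p, 0 ≤ F p := by
    intro p
    rw [hF]
    dsimp only
    split
    · exact Finset.prod_nonneg fun i _ => mul_nonneg (norm_nonneg _) (norm_nonneg _)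
    · exact le_refl 0
  have key : ∀ (j : ℕ) (a : Fin (j + 1) → ℕ),
      Summable (fun k : Fin (j + 1) → ℤ => ∏ i, ‖α (k i)‖ * ‖α (k i - (a i : ℤ))‖) ∧
      (∑' k : Fin (j + 1) → ℤ, ∏ i, ‖α (k i)‖ * ‖α (k i - (a i : ℤ))‖)
        = ∏ i, ∑' k : ℤ, ‖α k‖ * ‖α (k - (a i : ℤ))‖ := fun j a =>
    aux_pi_prod (fun i k => ‖α k‖ * ‖α (k - (a i : ℤ))‖)
      (fun i k => mul_nonneg (norm_nonneg _) (norm_nonneg _)) (fun i => hh _)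
  have hslicek : ∀ (j : ℕ) (a : Fin (j + 1) → ℕ),
      Summable fun k : Fin (j + 1) → ℤ => F ⟨j, a, k⟩ := by
    intro j a
    by_cases hc : (∀ i, 1 ≤ a i) ∧ (∑ i, a i) = m
    · have he : (fun k : Fin (j + 1) → ℤ => F ⟨j, a, k⟩)
          = fun k => ∏ i, ‖α (k i)‖ * ‖α (k i - (a i : ℤ))‖ := funext fun k => if_pos hc
      rw [he]; exact (key j a).1
    · have he : (fun k : Fin (j + 1) → ℤ => F ⟨j, a, k⟩) = fun _ => (0 : ℝ) :=
        funext fun k => if_neg hc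
      rw [he]; exact summable_zero
  have hSj : ∀ (j : ℕ) (a : Fin (j + 1) → ℕ),
      (∑' k : Fin (j + 1) → ℤ, F ⟨j, a, k⟩) = R ⟨j, a⟩ := by
    intro j a
    by_cases hc : (∀ i, 1 ≤ a i) ∧ (∑ i, a i) = m
    · calc (∑' k : Fin (j + 1) → ℤ, F ⟨j, a, k⟩)
          = ∑' k : Fin (j + 1) → ℤ, ∏ i, ‖α (k i)‖ * ‖α (k i - (a i : ℤ))‖ :=
            tsum_congr fun k => if_pos hc
        _ = ∏ i, ∑' k : ℤ, ‖α k‖ * ‖α (k - (a i : ℤ))‖ := (key j a).2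
        _ = R ⟨j, a⟩ := (if_pos hc).symm
    · calc (∑' k : Fin (j + 1) → ℤ, F ⟨j, a, k⟩)
          = ∑' k : Fin (j + 1) → ℤ, (0 : ℝ) := tsum_congr fun k => if_neg hc
        _ = 0 := tsum_zero
        _ = R ⟨j, a⟩ := (if_neg hc).symm
  have hRsupport : ∀ (j : ℕ) (a : Fin (j + 1) → ℕ),
      a ∉ Fintype.piFinset (fun _ : Fin (j + 1) => Finset.range (m + 1)) → R ⟨j, a⟩ = 0 := by
    intro j a ha
    apply if_neg
    rintro ⟨h1, h2⟩
    apply ha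
    rw [Fintype.mem_piFinset]
    intro i
    rw [Finset.mem_range, Nat.lt_succ_iff]
    calc a i ≤ ∑ i', a i' :=
          Finset.single_le_sum (fun i' _ => Nat.zero_le _) (Finset.mem_univ i)
      _ = m := h2
  have hRslice : ∀ j : ℕ, Summable fun a : Fin (j + 1) → ℕ => R ⟨j, a⟩ := fun j =>
    summable_of_ne_finset_zero (s := Fintype.piFinset fun _ => Finset.range (m + 1))
      (hRsupport j)
  have hslice : ∀ j : ℕ,
      Summable fun x : (Fin (j + 1) → ℕ) × (Fin (j + 1) → ℤ) => F ⟨j, x⟩ := by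
    intro j
    refine (summable_prod_of_nonneg (fun x => hF0 ⟨j, x⟩)).2 ⟨fun a => hslicek j a, ?_⟩
    have he : (fun a : Fin (j + 1) → ℕ => ∑' k : Fin (j + 1) → ℤ, F ⟨j, a, k⟩)
        = fun a => R ⟨j, a⟩ := funext fun a => hSj j a
    exact he ▸ hRslice j
  have hTm : ∀ j : ℕ, m ≤ j → ∀ x : (Fin (j + 1) → ℕ) × (Fin (j + 1) → ℤ),
      F ⟨j, x⟩ = 0 := by
    intro j hj x
    apply if_neg
    rintro ⟨h1, h2⟩
    have hge : (j + 1 : ℕ) ≤ ∑ i, x.1 i := by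
      calc (j + 1 : ℕ) = ∑ _i : Fin (j + 1), 1 := by simp
        _ ≤ ∑ i, x.1 i := Finset.sum_le_sum fun i _ => h1 i
    have h2' : (∑ i, x.1 i) = m := h2
    omega
  have hT : Summable fun j : ℕ =>
      ∑' x : (Fin (j + 1) → ℕ) × (Fin (j + 1) → ℤ), F ⟨j, x⟩ := by
    apply summable_of_ne_finset_zero (s := Finset.range m)
    intro j hj
    have hz : (fun x : (Fin (j + 1) → ℕ) × (Fin (j + 1) → ℤ) => F ⟨j, x⟩)
        = fun _ => (0 : ℝ) := funext (hTm j (by simpa using hj))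
    rw [hz, tsum_zero]
  have hFsum : Summable F := (summable_sigma_of_nonneg hF0).2 ⟨hslice, hT⟩
  have hR0 : ∀ c, 0 ≤ R c := by
    intro c
    rw [hR]
    dsimp only
    split
    · exact Finset.prod_nonneg fun i _ =>
        tsum_nonneg fun k => mul_nonneg (norm_nonneg _) (norm_nonneg _)
    · exact le_refl 0
  have hRsum : Summable R := by
    refine (summable_sigma_of_nonneg hR0).2 ⟨hRslice, ?_⟩
    have he : (fun j : ℕ => ∑' a : Fin (j + 1) → ℕ, R ⟨j, a⟩)
        = fun j : ℕ => ∑' x : (Fin (j + 1) → ℕ) × (Fin (j + 1) → ℤ), F ⟨j, x⟩ := by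
      funext j
      rw [Summable.tsum_prod' (hslice j) (fun a => hslicek j a)]
      exact (tsum_congr fun a => hSj j a).symm
    exact he ▸ hT
  have hle : ∀ p, ‖f p‖ ≤ F p := by
    intro p
    rw [hf]
    dsimp only
    by_cases hc : (∀ i, 1 ≤ p.2.1 i) ∧ (∑ i, p.2.1 i) = m ∧
        (∀ i : Fin p.1, p.2.2 i.succ < p.2.2 i.castSucc - (p.2.1 i.castSucc : ℤ))
    · rw [if_pos hc]
      have h2 : F p = ∏ i, ‖α (p.2.2 i)‖ * ‖α (p.2.2 i - (p.2.1 i : ℤ))‖ :=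
        if_pos ⟨hc.1, hc.2.1⟩
      rw [h2, norm_prod]
      exact le_of_eq <| Finset.prod_congr rfl fun i _ => by rw [norm_mul, RCLike.norm_conj]
    · rw [if_neg hc, norm_zero]; exact hF0 p
  have hnormsum : Summable fun p => ‖f p‖ :=
    Summable.of_nonneg_of_le (fun p => norm_nonneg _) hle hFsum
  refine ⟨hnormsum, ?_⟩
  calc ‖tsum f‖ ≤ ∑' p, ‖f p‖ := norm_tsum_le_tsum_norm hnormsum
    _ ≤ ∑' p, F p := Summable.tsum_le_tsum hle hnormsum hFsum
    _ = ∑' (j : ℕ) (x : (Fin (j + 1) → ℕ) × (Fin (j + 1) → ℤ)), F ⟨j, x⟩ :=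
        Summable.tsum_sigma' hslice hFsum
    _ = ∑' (j : ℕ) (a : Fin (j + 1) → ℕ), R ⟨j, a⟩ := tsum_congr fun j => by
        rw [Summable.tsum_prod' (hslice j) (fun a => hslicek j a)]
        exact tsum_congr fun a => hSj j a
    _ = tsum R := (Summable.tsum_sigma' hRslice hRsum).symm
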